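/- arXiv:2011.01091 — 2 statements merged into one kernel-verified Lean document; each statement's English description precedes it below -/
import Mathlib

section
/- Let N ≥ 2 and p > 1. There exists a constant c = c(N) > 0, depending only on the dimension N, such that for every ball B_r ⊂ ℝ^N of radius r and every continuously differentiable u : B_r → ℝ with |u|^p and |∇u|^p integrable over B_r, if |{x ∈ B_r : u(x) = 0}| ≥ |B_r|/2, then (∫_{B_r} |u|^p dx)^{1/p} ≤ c · ω_N · p · ((N−1)/N) · r · (∫_{B_r} |∇u|^p dx)^{1/p}. -/
open MeasureTheory Metric Set Bornology

open ENNReal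

noncomputable section

lemma onedim (a : ℝ) (ha : 0 < a) :
    ∫⁻ s in Ioc (0:ℝ) a, ENNReal.ofReal (s ^ (-(1/2) : ℝ)) =
      ENNReal.ofReal (2 * a ^ ((1:ℝ)/2)) := by
  have hint : IntervalIntegrable (fun s : ℝ => s ^ (-(1/2) : ℝ)) volume 0 a :=
    intervalIntegral.intervalIntegrable_rpow' (by norm_num)
  have hii : IntegrableOn (fun s : ℝ => s ^ (-(1/2) : ℝ)) (Ioc 0 a) volume := by
    simpa [intervalIntegrable_iff, uIoc_of_le ha.le] using hint
  rw [← ofReal_integral_eq_lintegral_ofReal hii ?nn]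
  case nn =>
    filter_upwards [ae_restrict_mem measurableSet_Ioc] with s hs
    exact Real.rpow_nonneg hs.1.le _
  congr 1
  have h := integral_rpow (a := 0) (b := a) (r := (-(1/2) : ℝ)) (Or.inl (by norm_num))
  rw [intervalIntegral.integral_of_le ha.le] at h
  rw [h, Real.zero_rpow (by norm_num)]
  norm_num
  ring

lemma radial {N : ℕ} (hN : 0 < N) (G : ℝ → ℝ≥0∞) (hG : Measurable G) :
    ∫⁻ v : EuclideanSpace ℝ (Fin N), G ‖v‖ =
      (N : ℝ≥0∞) * volume (ball (0 : EuclideanSpace ℝ (Fin N)) 1) *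
        ∫⁻ s in Ioi (0:ℝ), ENNReal.ofReal (s ^ (N - 1)) * G s := by
  haveI : Nonempty (Fin N) := ⟨⟨0, hN⟩⟩
  have hfr : Module.finrank ℝ (EuclideanSpace ℝ (Fin N)) = N := finrank_euclideanSpace_fin
  calc ∫⁻ v : EuclideanSpace ℝ (Fin N), G ‖v‖
      = ∫⁻ x : ({0}ᶜ : Set (EuclideanSpace ℝ (Fin N))), G ‖x.1‖
          ∂(volume.comap Subtype.val) := by
        have h := lintegral_subtype_comap (μ := (volume : Measure (EuclideanSpace ℝ (Fin N))))
          (measurableSet_singleton (0 : EuclideanSpace ℝ (Fin N))).compl (fun v => G ‖v‖)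
        rw [MeasureTheory.restrict_compl_singleton] at h
        exact h.symm
    _ = ∫⁻ y : sphere (0 : EuclideanSpace ℝ (Fin N)) 1 × Ioi (0:ℝ), G y.2.1
          ∂((volume : Measure (EuclideanSpace ℝ (Fin N))).toSphere.prod
            (Measure.volumeIoiPow (Module.finrank ℝ (EuclideanSpace ℝ (Fin N)) - 1))) := by
        rw [← (Measure.measurePreserving_homeomorphUnitSphereProd
          (volume : Measure (EuclideanSpace ℝ (Fin N)))).lintegral_comp (by fun_prop)]
        simp only [homeomorphUnitSphereProd_apply_snd_coe, div_one]
    _ = (volume : Measure (EuclideanSpace ℝ (Fin N))).toSphere univ *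
          ∫⁻ ρ : Ioi (0:ℝ), G ρ.1
            ∂(Measure.volumeIoiPow (Module.finrank ℝ (EuclideanSpace ℝ (Fin N)) - 1)) := by
        rw [MeasureTheory.lintegral_prod _ (by fun_prop)]
        simp [lintegral_const, mul_comm]
    _ = (N : ℝ≥0∞) * volume (ball (0 : EuclideanSpace ℝ (Fin N)) 1) *
          ∫⁻ s in Ioi (0:ℝ), ENNReal.ofReal (s ^ (N - 1)) * G s := by
        rw [Measure.toSphere_apply_univ, hfr]
        congr 1
        rw [Measure.volumeIoiPow,
          lintegral_withDensity_eq_lintegral_mul _ (by fun_prop) (by fun_prop)]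
        simp only [Pi.mul_apply]
        exact lintegral_subtype_comap measurableSet_Ioi
          (fun s => ENNReal.ofReal (s ^ (N - 1)) * G s)

lemma kernel_mass {N : ℕ} (hN : 1 ≤ N) {R : ℝ} (hR : 0 < R) :
    ∫⁻ v in ball (0 : EuclideanSpace ℝ (Fin N)) R,
        ENNReal.ofReal (‖v‖ ^ ((1:ℝ)/2 - N)) ≤
      (N : ℝ≥0∞) * volume (ball (0 : EuclideanSpace ℝ (Fin N)) 1) *
        ENNReal.ofReal (2 * R ^ ((1:ℝ)/2)) := by
  set e : ℝ := (1:ℝ)/2 - N with he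
  set G : ℝ → ℝ≥0∞ := (Iio R).indicator (fun s => ENNReal.ofReal (s ^ e)) with hG
  have hGm : Measurable G := by
    apply Measurable.indicator _ measurableSet_Iio
    fun_prop
  have h1 : ∫⁻ v in ball (0 : EuclideanSpace ℝ (Fin N)) R, ENNReal.ofReal (‖v‖ ^ e) =
      ∫⁻ v : EuclideanSpace ℝ (Fin N), G ‖v‖ := by
    rw [← lintegral_indicator measurableSet_ball]
    refine lintegral_congr fun v => ?_
    by_cases hv : v ∈ ball (0 : EuclideanSpace ℝ (Fin N)) R
    · rw [indicator_of_mem hv, hG, indicator_of_mem (by simpa [mem_ball_zero_iff] using hv)]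
    · rw [indicator_of_notMem hv, hG,
        indicator_of_notMem (by simpa [mem_ball_zero_iff] using hv)]
  rw [h1, radial (by omega) G hGm]
  refine mul_le_mul_right ?_ _
  have h2 : ∫⁻ s in Ioi (0:ℝ), ENNReal.ofReal (s ^ (N - 1)) * G s ≤
      ∫⁻ s in Ioi (0:ℝ), (Ioc 0 R).indicator (fun s => ENNReal.ofReal (s ^ (-(1/2) : ℝ))) s := by
    refine setLIntegral_mono' measurableSet_Ioi fun s hs => ?_
    have hs0 : (0:ℝ) < s := hs
    by_cases hsR : s < R
    · rw [hG, indicator_of_mem (mem_Iio.2 hsR), indicator_of_mem (by exact ⟨hs0, hsR.le⟩)]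
      rw [← ENNReal.ofReal_mul (by positivity)]
      apply ENNReal.ofReal_le_ofReal
      rw [← Real.rpow_natCast s (N-1), ← Real.rpow_add hs0]
      apply le_of_eq
      congr 1
      have : ((N - 1 : ℕ) : ℝ) = (N : ℝ) - 1 := by
        rw [Nat.cast_sub hN]; norm_num
      rw [this, he]; ring
    · rw [hG, indicator_of_notMem (by simpa using not_lt.1 (not_lt.2 (not_lt.1 (by simpa using hsR))))]
      simp
  calc ∫⁻ s in Ioi (0:ℝ), ENNReal.ofReal (s ^ (N - 1)) * G s
      ≤ ∫⁻ s in Ioi (0:ℝ), (Ioc 0 R).indicator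
          (fun s => ENNReal.ofReal (s ^ (-(1/2) : ℝ))) s := h2
    _ ≤ ∫⁻ s, (Ioc 0 R).indicator (fun s => ENNReal.ofReal (s ^ (-(1/2) : ℝ))) s :=
        setLIntegral_le_lintegral _ _
    _ = ENNReal.ofReal (2 * R ^ ((1:ℝ)/2)) := by
        rw [lintegral_indicator measurableSet_Ioc]
        exact onedim R hR

section FTC

variable {N : ℕ}

lemma norm_gradient_eq (u : EuclideanSpace ℝ (Fin N) → ℝ) (y : EuclideanSpace ℝ (Fin N)) :
    ‖gradient u y‖ = ‖fderiv ℝ u y‖ := by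
  rw [gradient]
  exact LinearIsometryEquiv.norm_map _ _

lemma measurable_gradient (u : EuclideanSpace ℝ (Fin N) → ℝ) :
    Measurable (gradient u) := by
  have : gradient u = fun y => (InnerProductSpace.toDual ℝ (EuclideanSpace ℝ (Fin N))).symm
      (fderiv ℝ u y) := rfl
  rw [this]
  exact ((InnerProductSpace.toDual ℝ (EuclideanSpace ℝ (Fin N))).symm.continuous.measurable).comp
    (measurable_fderiv ℝ u)

lemma ftc_seg {x₀ : EuclideanSpace ℝ (Fin N)} {r : ℝ} {u : EuclideanSpace ℝ (Fin N) → ℝ}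
    (hu : ContDiffOn ℝ 1 u (ball x₀ r)) {x z : EuclideanSpace ℝ (Fin N)}
    (hx : x ∈ ball x₀ r) (hz : z ∈ ball x₀ r) :
    |u x - u z| ≤ ‖x - z‖ * ∫ t in (0:ℝ)..1, ‖gradient u (z + t • (x - z))‖ := by
  set seg : ℝ → EuclideanSpace ℝ (Fin N) := fun t => z + t • (x - z) with hsegdef
  have hseg : ∀ t ∈ Icc (0:ℝ) 1, seg t ∈ ball x₀ r := by
    intro t ht
    have : seg t ∈ segment ℝ z x := by
      rw [segment_eq_image']
      exact mem_image_of_mem _ ht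
    exact (convex_ball x₀ r).segment_subset hz hx this
  have hsegc : Continuous seg := by fun_prop
  have hder : ∀ t ∈ Icc (0:ℝ) 1, HasDerivAt (fun t => u (seg t))
      ((fderiv ℝ u (seg t)) (x - z)) t := by
    intro t ht
    have hdiff : DifferentiableAt ℝ u (seg t) :=
      (hu.contDiffAt (isOpen_ball.mem_nhds (hseg t ht))).differentiableAt one_ne_zero
    have h1 : HasDerivAt seg (x - z) t := by
      have : HasDerivAt (fun t : ℝ => t • (x - z)) ((1:ℝ) • (x - z)) t :=
        (hasDerivAt_id t).smul_const (x - z)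
      simpa [hsegdef] using this.const_add z
    exact hdiff.hasFDerivAt.comp_hasDerivAt t h1
  have hcontf' : ContinuousOn (fun t => (fderiv ℝ u (seg t)) (x - z)) (Icc (0:ℝ) 1) := by
    have hfc : ContinuousOn (fderiv ℝ u) (ball x₀ r) :=
      hu.continuousOn_fderiv_of_isOpen isOpen_ball le_rfl
    exact ((hfc.comp hsegc.continuousOn hseg).clm_apply continuousOn_const)
  have hint : IntervalIntegrable (fun t => (fderiv ℝ u (seg t)) (x - z)) volume 0 1 :=
    ContinuousOn.intervalIntegrable (by rw [uIcc_of_le zero_le_one]; exact hcontf')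
  have heq : ∫ t in (0:ℝ)..1, (fderiv ℝ u (seg t)) (x - z) = u (seg 1) - u (seg 0) := by
    apply intervalIntegral.integral_eq_sub_of_hasDerivAt (f := fun t => u (seg t))
    · intro t ht
      rw [uIcc_of_le zero_le_one] at ht
      exact hder t ht
    · exact hint
  have hseg1 : seg 1 = x := by simp [hsegdef]
  have hseg0 : seg 0 = z := by simp [hsegdef]
  rw [hseg1, hseg0] at heq
  rw [← heq]
  calc |∫ t in (0:ℝ)..1, (fderiv ℝ u (seg t)) (x - z)|
      ≤ ∫ t in (0:ℝ)..1, |(fderiv ℝ u (seg t)) (x - z)| :=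
        intervalIntegral.abs_integral_le_integral_abs zero_le_one
    _ ≤ ∫ t in (0:ℝ)..1, ‖x - z‖ * ‖gradient u (seg t)‖ := by
        apply intervalIntegral.integral_mono_on zero_le_one
        · exact hint.abs
        · apply ContinuousOn.intervalIntegrable
          rw [uIcc_of_le zero_le_one]
          have hfc : ContinuousOn (fderiv ℝ u) (ball x₀ r) :=
            hu.continuousOn_fderiv_of_isOpen isOpen_ball le_rfl
          have : ContinuousOn (fun t => ‖fderiv ℝ u (seg t)‖) (Icc (0:ℝ) 1) :=
            (hfc.comp hsegc.continuousOn hseg).norm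
          exact continuousOn_const.mul (by simpa [norm_gradient_eq] using this)
        · intro t ht
          rw [norm_gradient_eq]
          calc |(fderiv ℝ u (seg t)) (x - z)| ≤ ‖fderiv ℝ u (seg t)‖ * ‖x - z‖ :=
                (fderiv ℝ u (seg t)).le_opNorm (x - z)
            _ = ‖x - z‖ * ‖fderiv ℝ u (seg t)‖ := mul_comm _ _
    _ = ‖x - z‖ * ∫ t in (0:ℝ)..1, ‖gradient u (seg t)‖ := by
        rw [← intervalIntegral.integral_const_mul]

end FTC

section Core

variable {N : ℕ}

/-- truncated Riesz kernel -/
def kker (N : ℕ) (r : ℝ) : EuclideanSpace ℝ (Fin N) → ℝ≥0∞ :=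
  (ball (0 : EuclideanSpace ℝ (Fin N)) (2*r)).indicator
    (fun v => ENNReal.ofReal (‖v‖ ^ ((1:ℝ)/2 - N)))

/-- cut-off gradient norm -/
def gg (x₀ : EuclideanSpace ℝ (Fin N)) (r : ℝ) (u : EuclideanSpace ℝ (Fin N) → ℝ) :
    EuclideanSpace ℝ (Fin N) → ℝ≥0∞ :=
  (ball x₀ r).indicator (fun w => ENNReal.ofReal ‖gradient u w‖)

lemma kker_meas (r : ℝ) : Measurable (kker N r) := by
  apply Measurable.indicator _ measurableSet_ball
  fun_prop

lemma gg_meas (x₀ : EuclideanSpace ℝ (Fin N)) (r : ℝ) (u : EuclideanSpace ℝ (Fin N) → ℝ) :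
    Measurable (gg x₀ r u) := by
  apply Measurable.indicator _ measurableSet_ball
  exact (measurable_gradient u).norm.ennreal_ofReal

lemma kker_mass_left (hN : 1 ≤ N) {r : ℝ} (hr : 0 < r) (y : EuclideanSpace ℝ (Fin N)) :
    ∫⁻ w, kker N r (y - w) ≤
      (N : ℝ≥0∞) * volume (ball (0 : EuclideanSpace ℝ (Fin N)) 1) *
        ENNReal.ofReal (2 * (2*r) ^ ((1:ℝ)/2)) := by
  have mp : MeasurePreserving (fun w : EuclideanSpace ℝ (Fin N) => y - w) volume volume := by
    have h1 := (measurePreserving_add_left (volume : Measure (EuclideanSpace ℝ (Fin N))) y).comp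
      (Measure.measurePreserving_neg (volume : Measure (EuclideanSpace ℝ (Fin N))))
    simpa [Function.comp_def, sub_eq_add_neg] using h1
  rw [mp.lintegral_comp (kker_meas r)]
  rw [kker, lintegral_indicator measurableSet_ball]
  exact kernel_mass hN (by positivity)

lemma kker_mass_right (hN : 1 ≤ N) {r : ℝ} (hr : 0 < r) (w : EuclideanSpace ℝ (Fin N)) :
    ∫⁻ x, kker N r (x - w) ≤
      (N : ℝ≥0∞) * volume (ball (0 : EuclideanSpace ℝ (Fin N)) 1) *
        ENNReal.ofReal (2 * (2*r) ^ ((1:ℝ)/2)) := by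
  have mp : MeasurePreserving (fun x : EuclideanSpace ℝ (Fin N) => x - w) volume volume := by
    have h1 := measurePreserving_add_right (volume : Measure (EuclideanSpace ℝ (Fin N))) (-w)
    simpa [sub_eq_add_neg] using h1
  rw [mp.lintegral_comp (kker_meas r)]
  rw [kker, lintegral_indicator measurableSet_ball]
  exact kernel_mass hN (by positivity)

lemma core_subst (hN : 1 ≤ N) {x₀ : EuclideanSpace ℝ (Fin N)} {r : ℝ} (hr : 0 < r)
    {u : EuclideanSpace ℝ (Fin N) → ℝ} (hu : ContDiffOn ℝ 1 u (ball x₀ r))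
    {x : EuclideanSpace ℝ (Fin N)} (hx : x ∈ ball x₀ r) :
    ∫⁻ z in ball x₀ r,
        ENNReal.ofReal (‖x - z‖ * ∫ t in (0:ℝ)..1, ‖gradient u (z + t • (x - z))‖) ≤
      ENNReal.ofReal (2 * (2*r) ^ ((N:ℝ) + 1/2)) *
        ∫⁻ w, gg x₀ r u w * kker N r (x - w) := by
  have hgm := gg_meas x₀ r u
  have hkm := kker_meas (N := N) r
  set B := ball x₀ r with hB
  set g := gg x₀ r u with hg
  set k := kker N r with hk
  set K : ℝ≥0∞ := ∫⁻ w, g w * k (x - w) with hK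
  set Φ : EuclideanSpace ℝ (Fin N) → ℝ → ℝ≥0∞ :=
    fun z t => ENNReal.ofReal ‖x - z‖ * g (z + t • (x - z)) with hΦ
  have hsegmem : ∀ z ∈ B, ∀ t ∈ Icc (0:ℝ) 1, z + t • (x - z) ∈ B := by
    intro z hz t ht
    have : z + t • (x - z) ∈ segment ℝ z x := by
      rw [segment_eq_image']
      exact mem_image_of_mem _ ht
    exact (convex_ball x₀ r).segment_subset hz hx this
  -- Step 1
  have h1 : ∀ z ∈ B, ENNReal.ofReal (‖x - z‖ * ∫ t in (0:ℝ)..1, ‖gradient u (z + t • (x - z))‖)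
      ≤ ∫⁻ t in Ico (0:ℝ) 1, Φ z t := by
    intro z hz
    have hfc : ContinuousOn (fderiv ℝ u) B := hu.continuousOn_fderiv_of_isOpen isOpen_ball le_rfl
    have hsegc : Continuous (fun t : ℝ => z + t • (x - z)) := by fun_prop
    have hcont : ContinuousOn (fun t : ℝ => ‖gradient u (z + t • (x - z))‖) (Icc 0 1) := by
      have h := ((hfc.comp hsegc.continuousOn (hsegmem z hz)).norm)
      have : (fun t : ℝ => ‖gradient u (z + t • (x - z))‖) =
          fun t => ‖fderiv ℝ u (z + t • (x - z))‖ := by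
        funext t; exact norm_gradient_eq u _
      rw [this]
      exact h
    have hInt : IntegrableOn (fun t : ℝ => ‖gradient u (z + t • (x - z))‖) (Ioc 0 1) volume :=
      (hcont.integrableOn_Icc).mono_set Ioc_subset_Icc_self
    rw [intervalIntegral.integral_of_le zero_le_one,
      ENNReal.ofReal_mul (norm_nonneg _),
      ofReal_integral_eq_lintegral_ofReal hInt
        (Filter.Eventually.of_forall fun t => norm_nonneg _)]
    have heq : ∫⁻ t in Ioc (0:ℝ) 1, ENNReal.ofReal ‖gradient u (z + t • (x - z))‖ =
        ∫⁻ t in Ioc (0:ℝ) 1, g (z + t • (x - z)) := by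
      refine setLIntegral_congr_fun measurableSet_Ioc
        (fun t ht => ?_)
      rw [hg, gg, indicator_of_mem (hsegmem z hz t (Ioc_subset_Icc_self ht))]
    rw [heq]
    have hIcoIoc : ∫⁻ t in Ioc (0:ℝ) 1, g (z + t • (x - z)) =
        ∫⁻ t in Ico (0:ℝ) 1, g (z + t • (x - z)) := by
      rw [Measure.restrict_congr_set Ioc_ae_eq_Icc,
        ← Measure.restrict_congr_set Ico_ae_eq_Icc]
    rw [hIcoIoc, ← lintegral_const_mul' _ _ ENNReal.ofReal_ne_top]
  -- Step 2 : Tonelli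
  have hΦm : Measurable (Function.uncurry Φ) := by
    apply Measurable.mul
    · fun_prop
    · exact hgm.comp (by fun_prop)
  have h2 : ∫⁻ z in B, ∫⁻ t in Ico (0:ℝ) 1, Φ z t =
      ∫⁻ t in Ico (0:ℝ) 1, ∫⁻ z in B, Φ z t :=
    lintegral_lintegral_swap hΦm.aemeasurable
  -- Step 3 : per t estimate
  have h3 : ∀ t ∈ Ico (0:ℝ) 1, ∫⁻ z in B, Φ z t ≤
      ENNReal.ofReal ((2*r) ^ ((N:ℝ) + 1/2) * (1-t) ^ (-(1/2) : ℝ)) * K := by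
    intro t ht
    set a : ℝ := 1 - t with ha
    have ha0 : 0 < a := by simp [ha]; linarith [ht.2]
    have ha1 : a ≤ 1 := by simp [ha]; linarith [ht.1]
    set ψ : EuclideanSpace ℝ (Fin N) → EuclideanSpace ℝ (Fin N) :=
      fun z => z + t • (x - z) with hψ
    set F : EuclideanSpace ℝ (Fin N) → ℝ≥0∞ := fun w => g w * k (x - w) with hF
    have hFm : Measurable F := hgm.mul (hkm.comp (by fun_prop))
    set Hc : ℝ≥0∞ := ENNReal.ofReal (a⁻¹ * (2*r*a) ^ ((N:ℝ) + 1/2)) with hHc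
    have hxψ : ∀ z, x - ψ z = a • (x - z) := by
      intro z
      rw [hψ, ha]
      module
    have claim : ∀ z, B.indicator (fun z => Φ z t) z ≤ Hc * F (ψ z) := by
      intro z
      by_cases hz : z ∈ B
      · rw [indicator_of_mem hz]
        have hψz : ψ z ∈ B := hsegmem z hz t ⟨ht.1, ht.2.le⟩
        have hgψ : g (ψ z) = g (ψ z) := rfl
        by_cases hzx : z = x
        · subst hzx
          simp [hΦ]
        · have hdist : ‖x - z‖ < 2*r := by
            have h1 : dist x x₀ < r := mem_ball.1 hx
            have h2 : dist z x₀ < r := mem_ball.1 hz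
            calc ‖x - z‖ = dist x z := by rw [dist_eq_norm]
              _ ≤ dist x x₀ + dist x₀ z := dist_triangle _ _ _
              _ < r + r := by rw [dist_comm x₀ z]; linarith
              _ = 2*r := by ring
          have hs0 : 0 < ‖x - z‖ := by
            rw [norm_pos_iff, sub_ne_zero]
            exact fun h => hzx h.symm
          set s : ℝ := a * ‖x - z‖ with hsdef
          have hsnorm : ‖x - ψ z‖ = s := by
            rw [hxψ z, norm_smul, Real.norm_eq_abs, abs_of_pos ha0]
          have hspos : 0 < s := by positivity
          have hslt : s < 2*r*a := by
            rw [hsdef]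
            calc a * ‖x - z‖ < a * (2*r) := by
                  exact mul_lt_mul_of_pos_left hdist ha0
              _ = 2*r*a := by ring
          have hsle : s < 2*r := lt_of_lt_of_le hslt (by nlinarith)
          have hkval : k (x - ψ z) = ENNReal.ofReal (s ^ ((1:ℝ)/2 - N)) := by
            rw [hk, kker, indicator_of_mem (by
              rw [mem_ball_zero_iff, hsnorm]; exact hsle)]
            rw [hsnorm]
          have hreal : ‖x - z‖ ≤ a⁻¹ * (2*r*a) ^ ((N:ℝ) + 1/2) * s ^ ((1:ℝ)/2 - N) := by
            have hxz : ‖x - z‖ = a⁻¹ * s := by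
              rw [hsdef]; field_simp
            rw [hxz]
            have hsplit : s = s ^ ((N:ℝ) + 1/2) * s ^ ((1:ℝ)/2 - N) := by
              rw [← Real.rpow_add hspos,
                show (N:ℝ) + 1/2 + ((1:ℝ)/2 - N) = 1 by ring, Real.rpow_one]
            calc a⁻¹ * s = a⁻¹ * (s ^ ((N:ℝ) + 1/2) * s ^ ((1:ℝ)/2 - N)) := by rw [← hsplit]
              _ ≤ a⁻¹ * ((2*r*a) ^ ((N:ℝ) + 1/2) * s ^ ((1:ℝ)/2 - N)) := by
                  apply mul_le_mul_of_nonneg_left _ (by positivity)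
                  apply mul_le_mul_of_nonneg_right _ (Real.rpow_nonneg hspos.le _)
                  exact Real.rpow_le_rpow hspos.le hslt.le (by positivity)
              _ = a⁻¹ * (2*r*a) ^ ((N:ℝ) + 1/2) * s ^ ((1:ℝ)/2 - N) := by ring
          calc Φ z t = ENNReal.ofReal ‖x - z‖ * g (ψ z) := rfl
            _ ≤ ENNReal.ofReal (a⁻¹ * (2*r*a) ^ ((N:ℝ) + 1/2) * s ^ ((1:ℝ)/2 - N)) * g (ψ z) :=
                mul_le_mul_left (ENNReal.ofReal_le_ofReal hreal) _
            _ = Hc * (g (ψ z) * ENNReal.ofReal (s ^ ((1:ℝ)/2 - N))) := by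
                rw [hHc, ENNReal.ofReal_mul (by positivity)]
                ring
            _ = Hc * F (ψ z) := by
                show _ = Hc * (g (ψ z) * k (x - ψ z))
                rw [hkval]
      · rw [indicator_of_notMem hz]
        exact zero_le
    have hψeq : ψ = (fun w => t • x + w) ∘ (fun z => a • z) := by
      funext z
      show z + t • (x - z) = t • x + a • z
      rw [ha]
      module
    have hfr : Module.finrank ℝ (EuclideanSpace ℝ (Fin N)) = N := finrank_euclideanSpace_fin
    have hmapped : ∫⁻ z, F (ψ z) = ENNReal.ofReal ((a ^ N)⁻¹) * K := by
      have hF' : Measurable fun w => F (t • x + w) := hFm.comp (by fun_prop)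
      calc ∫⁻ z, F (ψ z) = ∫⁻ z, (fun w => F (t • x + w)) (a • z) := by
            rw [hψeq]; rfl
        _ = ∫⁻ w, F (t • x + w) ∂(Measure.map (a • ·) volume) :=
            (lintegral_map hF' (measurable_const_smul a)).symm
        _ = ENNReal.ofReal (|(a ^ N)⁻¹|) * ∫⁻ w, F (t • x + w) := by
            rw [Measure.map_addHaar_smul volume ha0.ne', hfr, lintegral_smul_measure, smul_eq_mul]
        _ = ENNReal.ofReal ((a ^ N)⁻¹) * K := by
            congr 1
            · congr 1
              exact abs_of_pos (by positivity)
            · rw [hK]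
              exact (measurePreserving_add_left volume (t • x)).lintegral_comp hFm
    calc ∫⁻ z in B, Φ z t = ∫⁻ z, B.indicator (fun z => Φ z t) z :=
          (lintegral_indicator measurableSet_ball _).symm
      _ ≤ ∫⁻ z, Hc * F (ψ z) := lintegral_mono claim
      _ = Hc * ∫⁻ z, F (ψ z) := by
          rw [lintegral_const_mul' _ _ ENNReal.ofReal_ne_top]
      _ = Hc * (ENNReal.ofReal ((a ^ N)⁻¹) * K) := by rw [hmapped]
      _ = ENNReal.ofReal ((2*r) ^ ((N:ℝ) + 1/2) * a ^ (-(1/2) : ℝ)) * K := by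
          rw [hHc, ← mul_assoc, ← ENNReal.ofReal_mul (by positivity)]
          congr 2
          have expand : (2*r*a) ^ ((N:ℝ) + 1/2) = (2*r) ^ ((N:ℝ) + 1/2) * a ^ ((N:ℝ) + 1/2) :=
            Real.mul_rpow (by positivity) ha0.le
          rw [expand]
          have : a⁻¹ * ((2*r) ^ ((N:ℝ) + 1/2) * a ^ ((N:ℝ) + 1/2)) * (a ^ N)⁻¹ =
              (2*r) ^ ((N:ℝ) + 1/2) * (a ^ ((N:ℝ) + 1/2) * a⁻¹ * (a ^ N)⁻¹) := by ring
          rw [this]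
          congr 1
          rw [← Real.rpow_neg_one a, ← Real.rpow_natCast a N, ← Real.rpow_neg ha0.le,
            ← Real.rpow_add ha0, ← Real.rpow_add ha0]
          congr 1
          ring
  -- Step 4: integrate in t
  have hrefl : ∫⁻ t in Ico (0:ℝ) 1, ENNReal.ofReal ((1-t) ^ (-(1/2) : ℝ)) =
      ENNReal.ofReal 2 := by
    have mp : MeasurePreserving (fun s : ℝ => 1 - s) volume volume := by
      have h1 := (measurePreserving_add_left (volume : Measure ℝ) 1).comp
        (Measure.measurePreserving_neg (volume : Measure ℝ))
      simpa [Function.comp_def, sub_eq_add_neg] using h1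
    have emb : MeasurableEmbedding (fun s : ℝ => 1 - s) := by
      have h : (fun s : ℝ => 1 - s) = ⇑(MeasurableEquiv.subLeft (1:ℝ)) := by
        funext s; rfl
      rw [h]
      exact (MeasurableEquiv.subLeft (1:ℝ)).measurableEmbedding
    have hpre : (fun s : ℝ => 1 - s) ⁻¹' (Ioc 0 1) = Ico (0:ℝ) 1 := by
      ext t
      simp only [mem_preimage, mem_Ioc, mem_Ico]
      constructor
      · rintro ⟨h1, h2⟩; constructor <;> linarith
      · rintro ⟨h1, h2⟩; constructor <;> linarith
    have := mp.setLIntegral_comp_preimage_emb emb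
      (fun s => ENNReal.ofReal (s ^ (-(1/2) : ℝ))) (Ioc 0 1)
    rw [hpre] at this
    rw [this, onedim 1 one_pos]
    norm_num
  have h4 : ∫⁻ t in Ico (0:ℝ) 1,
      ENNReal.ofReal ((2*r) ^ ((N:ℝ) + 1/2) * (1-t) ^ (-(1/2) : ℝ)) * K =
      ENNReal.ofReal (2 * (2*r) ^ ((N:ℝ) + 1/2)) * K := by
    have hrw : ∀ t : ℝ, ENNReal.ofReal ((2*r) ^ ((N:ℝ) + 1/2) * (1-t) ^ (-(1/2) : ℝ)) * K =
        (ENNReal.ofReal ((2*r) ^ ((N:ℝ) + 1/2)) * K) *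
          ENNReal.ofReal ((1-t) ^ (-(1/2) : ℝ)) := by
      intro t
      rw [ENNReal.ofReal_mul (by positivity)]
      ring
    simp_rw [hrw]
    rw [lintegral_const_mul _ (by fun_prop :
      Measurable fun t : ℝ => ENNReal.ofReal ((1-t) ^ (-(1/2) : ℝ))), hrefl,
      show ENNReal.ofReal ((2*r) ^ ((N:ℝ) + 1/2)) * K * ENNReal.ofReal 2 =
        (ENNReal.ofReal 2 * ENNReal.ofReal ((2*r) ^ ((N:ℝ) + 1/2))) * K by ring,
      ← ENNReal.ofReal_mul (by norm_num)]
  calc ∫⁻ z in B, ENNReal.ofReal (‖x - z‖ * ∫ t in (0:ℝ)..1, ‖gradient u (z + t • (x - z))‖)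
      ≤ ∫⁻ z in B, ∫⁻ t in Ico (0:ℝ) 1, Φ z t := setLIntegral_mono' measurableSet_ball h1
    _ = ∫⁻ t in Ico (0:ℝ) 1, ∫⁻ z in B, Φ z t := h2
    _ ≤ ∫⁻ t in Ico (0:ℝ) 1,
          ENNReal.ofReal ((2*r) ^ ((N:ℝ) + 1/2) * (1-t) ^ (-(1/2) : ℝ)) * K :=
        setLIntegral_mono' measurableSet_Ico h3
    _ = ENNReal.ofReal (2 * (2*r) ^ ((N:ℝ) + 1/2)) * K := h4
lemma schur (hN : 1 ≤ N) {x₀ : EuclideanSpace ℝ (Fin N)} {r : ℝ} (hr : 0 < r)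
    (u : EuclideanSpace ℝ (Fin N) → ℝ) {p q : ℝ} (hpq : p.HolderConjugate q) :
    ∫⁻ x in ball x₀ r, (∫⁻ w, gg x₀ r u w * kker N r (x - w)) ^ p ≤
      ((N : ℝ≥0∞) * volume (ball (0 : EuclideanSpace ℝ (Fin N)) 1) *
          ENNReal.ofReal (2 * (2*r) ^ ((1:ℝ)/2))) ^ p *
        ∫⁻ w in ball x₀ r, (ENNReal.ofReal ‖gradient u w‖) ^ p := by
  have hgm := gg_meas x₀ r u
  have hkm := kker_meas (N := N) r
  set g := gg x₀ r u with hg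
  set k := kker N r with hk
  set M : ℝ≥0∞ := (N : ℝ≥0∞) * volume (ball (0 : EuclideanSpace ℝ (Fin N)) 1) *
    ENNReal.ofReal (2 * (2*r) ^ ((1:ℝ)/2)) with hM
  have hMne : M ≠ ⊤ := by
    rw [hM]
    exact ENNReal.mul_ne_top (ENNReal.mul_ne_top (ENNReal.natCast_ne_top N)
      measure_ball_lt_top.ne) ENNReal.ofReal_ne_top
  have hp0 : 0 < p := hpq.pos
  have hq0 : 0 < q := hpq.symm.pos
  have hpq1 : 1/q + 1/p = 1 := by simpa [one_div] using hpq.symm.inv_add_inv_eq_one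
  have key : ∀ x : EuclideanSpace ℝ (Fin N), (∫⁻ w, g w * k (x - w)) ≤
      M ^ (1/q) * (∫⁻ w, g w ^ p * k (x - w)) ^ (1/p) := by
    intro x
    have hsplit : ∀ w, g w * k (x - w) =
        (k (x - w) ^ ((1:ℝ)/q)) * ((k (x - w) ^ ((1:ℝ)/p)) * g w) := by
      intro w
      rw [← mul_assoc, ← ENNReal.rpow_add_of_nonneg _ _ (by positivity) (by positivity)]
      rw [show (1:ℝ)/q + 1/p = 1 from hpq1, ENNReal.rpow_one, mul_comm]
    simp_rw [hsplit]
    have hold := ENNReal.lintegral_mul_le_Lp_mul_Lq (volume :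
        Measure (EuclideanSpace ℝ (Fin N))) hpq.symm
      (f := fun w => k (x - w) ^ ((1:ℝ)/q))
      (g := fun w => (k (x - w) ^ ((1:ℝ)/p)) * g w)
      ((hkm.comp (by fun_prop)).pow_const _).aemeasurable
      (((hkm.comp (by fun_prop)).pow_const _).mul hgm).aemeasurable
    refine le_trans hold ?_
    have e1 : ∫⁻ w, (k (x - w) ^ ((1:ℝ)/q)) ^ q = ∫⁻ w, k (x - w) := by
      apply lintegral_congr fun w => ?_
      rw [← ENNReal.rpow_mul, one_div, inv_mul_cancel₀ hq0.ne', ENNReal.rpow_one]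
    have e2 : ∫⁻ w, ((k (x - w) ^ ((1:ℝ)/p)) * g w) ^ p = ∫⁻ w, g w ^ p * k (x - w) := by
      apply lintegral_congr fun w => ?_
      rw [ENNReal.mul_rpow_of_nonneg _ _ hp0.le, ← ENNReal.rpow_mul, one_div,
        inv_mul_cancel₀ hp0.ne', ENNReal.rpow_one, mul_comm]
    rw [e1, e2]
    exact mul_le_mul' (ENNReal.rpow_le_rpow (kker_mass_left hN hr x) (by positivity)) le_rfl
  have key2 : ∀ x : EuclideanSpace ℝ (Fin N), (∫⁻ w, g w * k (x - w)) ^ p ≤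
      M ^ (p/q) * ∫⁻ w, g w ^ p * k (x - w) := by
    intro x
    calc (∫⁻ w, g w * k (x - w)) ^ p
        ≤ (M ^ ((1:ℝ)/q) * (∫⁻ w, g w ^ p * k (x - w)) ^ ((1:ℝ)/p)) ^ p :=
          ENNReal.rpow_le_rpow (key x) hp0.le
      _ = M ^ (p/q) * ∫⁻ w, g w ^ p * k (x - w) := by
          rw [ENNReal.mul_rpow_of_nonneg _ _ hp0.le, ← ENNReal.rpow_mul,
            ← ENNReal.rpow_mul, show (1/p)*p = (1:ℝ) by field_simp,
            show (1/q)*p = p/q by ring, ENNReal.rpow_one]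
  have hMpq : M ^ (p/q) ≠ ⊤ := ENNReal.rpow_ne_top_of_nonneg (by positivity) hMne
  have hgp : Measurable fun w => g w ^ p := hgm.pow_const _
  have hswap : ∫⁻ x in ball x₀ r, ∫⁻ w, g w ^ p * k (x - w) =
      ∫⁻ w, ∫⁻ x in ball x₀ r, g w ^ p * k (x - w) :=
    lintegral_lintegral_swap (((hgp.comp measurable_snd)).mul
      (hkm.comp (measurable_fst.sub measurable_snd))).aemeasurable
  have hinner : ∀ w, ∫⁻ x in ball x₀ r, g w ^ p * k (x - w) ≤ g w ^ p * M := by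
    intro w
    rw [lintegral_const_mul' _ _ (ENNReal.rpow_ne_top_of_nonneg hp0.le (by
      by_cases hw : w ∈ ball x₀ r <;> simp [hg, gg, indicator_of_mem, indicator_of_notMem, hw]))]
    exact mul_le_mul' le_rfl ((setLIntegral_le_lintegral _ _).trans (kker_mass_right hN hr w))
  have hq' : q⁻¹ = 1 - p⁻¹ := by linarith [hpq.inv_add_inv_eq_one]
  have hpq2 : p/q + 1 = p := by
    rw [div_eq_mul_inv, hq', mul_sub, mul_inv_cancel₀ hp0.ne']; ring
  have hDind : ∫⁻ w, g w ^ p =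
      ∫⁻ w in ball x₀ r, (ENNReal.ofReal ‖gradient u w‖) ^ p := by
    rw [← lintegral_indicator measurableSet_ball]
    apply lintegral_congr fun w => ?_
    by_cases hw : w ∈ ball x₀ r
    · rw [hg, gg, indicator_of_mem hw, indicator_of_mem hw]
    · rw [hg, gg, indicator_of_notMem hw, indicator_of_notMem hw,
        ENNReal.zero_rpow_of_pos hp0]
  calc ∫⁻ x in ball x₀ r, (∫⁻ w, g w * k (x - w)) ^ p
      ≤ ∫⁻ x in ball x₀ r, M ^ (p/q) * ∫⁻ w, g w ^ p * k (x - w) :=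
        lintegral_mono fun x => key2 x
    _ = M ^ (p/q) * ∫⁻ x in ball x₀ r, ∫⁻ w, g w ^ p * k (x - w) :=
        lintegral_const_mul' _ _ hMpq
    _ = M ^ (p/q) * ∫⁻ w, ∫⁻ x in ball x₀ r, g w ^ p * k (x - w) := by rw [hswap]
    _ ≤ M ^ (p/q) * ∫⁻ w, g w ^ p * M :=
        mul_le_mul' le_rfl (lintegral_mono fun w => hinner w)
    _ = M ^ (p/q) * (M * ∫⁻ w, g w ^ p) := by
        rw [lintegral_mul_const _ hgp, mul_comm (∫⁻ w, g w ^ p) M]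
    _ = (M ^ (p/q) * M) * ∫⁻ w, g w ^ p := by ring
    _ = M ^ p * ∫⁻ w in ball x₀ r, (ENNReal.ofReal ‖gradient u w‖) ^ p := by
        rw [hDind]
        congr 1
        have h := ENNReal.rpow_add_of_nonneg (x := M) (p/q) 1 (by positivity) zero_le_one
        rw [hpq2, ENNReal.rpow_one] at h
        exact h.symm

lemma zero_set_measurable {x₀ : EuclideanSpace ℝ (Fin N)} {r : ℝ}
    {u : EuclideanSpace ℝ (Fin N) → ℝ} (hu : ContDiffOn ℝ 1 u (ball x₀ r)) :
    MeasurableSet {z ∈ ball x₀ r | u z = 0} := by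
  have hopen : IsOpen (ball x₀ r ∩ u ⁻¹' ({0}ᶜ)) :=
    hu.continuousOn.isOpen_inter_preimage isOpen_ball (isOpen_compl_singleton)
  have heq : {z ∈ ball x₀ r | u z = 0} = ball x₀ r \ (ball x₀ r ∩ u ⁻¹' ({0}ᶜ)) := by
    ext z
    simp only [mem_sep_iff, mem_diff, mem_inter_iff, mem_preimage, mem_compl_iff,
      mem_singleton_iff]
    tauto
  rw [heq]
  exact measurableSet_ball.diff hopen.measurableSet

lemma avg (hN : 1 ≤ N) {x₀ : EuclideanSpace ℝ (Fin N)} {r : ℝ} (hr : 0 < r)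
    {u : EuclideanSpace ℝ (Fin N) → ℝ} (hu : ContDiffOn ℝ 1 u (ball x₀ r))
    {x : EuclideanSpace ℝ (Fin N)} (hx : x ∈ ball x₀ r) :
    ENNReal.ofReal |u x| * volume {z ∈ ball x₀ r | u z = 0} ≤
      ∫⁻ z in ball x₀ r,
        ENNReal.ofReal (‖x - z‖ * ∫ t in (0:ℝ)..1, ‖gradient u (z + t • (x - z))‖) := by
  set Z := {z ∈ ball x₀ r | u z = 0} with hZ
  have hZB : Z ⊆ ball x₀ r := fun z hz => hz.1
  have hZm : MeasurableSet Z := zero_set_measurable hu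
  calc ENNReal.ofReal |u x| * volume Z
      = ∫⁻ _ in Z, ENNReal.ofReal |u x| := (setLIntegral_const Z _).symm
    _ ≤ ∫⁻ z in Z, ENNReal.ofReal
          (‖x - z‖ * ∫ t in (0:ℝ)..1, ‖gradient u (z + t • (x - z))‖) := by
        refine setLIntegral_mono' hZm fun z hz => ?_
        apply ENNReal.ofReal_le_ofReal
        have h0 : u z = 0 := hz.2
        have := ftc_seg hu hx (hZB hz)
        rw [h0, sub_zero] at this
        exact this
    _ ≤ ∫⁻ z in ball x₀ r, ENNReal.ofReal
          (‖x - z‖ * ∫ t in (0:ℝ)..1, ‖gradient u (z + t • (x - z))‖) :=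
        lintegral_mono_set hZB

end Core

/-- Lemma 2.4 (Poincaré type inequality): if `u` vanishes on at least half of the ball `B_r`,
then its `L^p` norm is controlled by the `L^p` norm of its gradient, with a constant
depending only on the dimension `N`. -/
theorem stmt2 (N : ℕ) (hN : 2 ≤ N) :
    ∃ c > (0 : ℝ), ∀ p : ℝ, 1 < p →
      ∀ (x₀ : EuclideanSpace ℝ (Fin N)) (r : ℝ), 0 < r →
      ∀ u : EuclideanSpace ℝ (Fin N) → ℝ,
        ContDiffOn ℝ 1 u (ball x₀ r) →
        IntegrableOn (fun x => |u x| ^ p) (ball x₀ r) →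
        IntegrableOn (fun x => ‖gradient u x‖ ^ p) (ball x₀ r) →
        volume (ball x₀ r) / 2 ≤ volume {x ∈ ball x₀ r | u x = 0} →
        (∫ x in ball x₀ r, |u x| ^ p) ^ (1 / p) ≤
          c * (volume (ball (0 : EuclideanSpace ℝ (Fin N)) 1)).toReal * p *
            (((N : ℝ) - 1) / N) * r *
            (∫ x in ball x₀ r, ‖gradient u x‖ ^ p) ^ (1 / p) := by
  haveI : Nonempty (Fin N) := ⟨⟨0, by omega⟩⟩
  have hN1 : 1 ≤ N := by omega
  set ω : ℝ≥0∞ := volume (ball (0 : EuclideanSpace ℝ (Fin N)) 1) with hω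
  have hω0 : 0 < ω := measure_ball_pos volume 0 one_pos
  have hωtop : ω ≠ ⊤ := measure_ball_lt_top.ne
  set ωR : ℝ := ω.toReal with hωR
  have hωR0 : 0 < ωR := ENNReal.toReal_pos hω0.ne' hωtop
  refine ⟨2^(N+5) * N / ωR, by positivity, ?_⟩
  intro p hp x₀ r hr u hu hint1 hint2 hhalf
  have hp0 : 0 < p := lt_trans one_pos hp
  have hpq : p.HolderConjugate (Real.conjExponent p) := Real.HolderConjugate.conjExponent hp
  set B := ball x₀ r with hB
  set V := volume B with hV
  have hV0 : V ≠ 0 := (measure_ball_pos volume x₀ hr).ne'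
  have hVtop : V ≠ ⊤ := measure_ball_lt_top.ne
  have h2V0 : V/2 ≠ 0 := by
    simp only [ne_eq, ENNReal.div_eq_zero_iff, hV0, false_or]
    norm_num
  have h2Vtop : V/2 ≠ ⊤ := (ENNReal.div_lt_top hVtop (by norm_num)).ne
  set K : EuclideanSpace ℝ (Fin N) → ℝ≥0∞ :=
    fun x => ∫⁻ w, gg x₀ r u w * kker N r (x - w) with hK
  set M : ℝ≥0∞ := (N : ℝ≥0∞) * ω * ENNReal.ofReal (2 * (2*r) ^ ((1:ℝ)/2)) with hM
  set C2 : ℝ≥0∞ := ENNReal.ofReal (2 * (2*r) ^ ((N:ℝ) + 1/2)) with hC2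
  have hC2top : C2 ≠ ⊤ := ENNReal.ofReal_ne_top
  have hVinvtop : (V/2)⁻¹ ≠ ⊤ := ENNReal.inv_ne_top.2 h2V0
  have hE2top : (V/2)⁻¹ * C2 ≠ ⊤ := ENNReal.mul_ne_top hVinvtop hC2top
  have hMtop : M ≠ ⊤ := ENNReal.mul_ne_top
    (ENNReal.mul_ne_top (ENNReal.natCast_ne_top N) hωtop) ENNReal.ofReal_ne_top
  set Ap : ℝ≥0∞ := ∫⁻ x in B, (ENNReal.ofReal |u x|) ^ p with hAp
  set Dp : ℝ≥0∞ := ∫⁻ w in B, (ENNReal.ofReal ‖gradient u w‖) ^ p with hDp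
  have hptwise : ∀ x ∈ B, ENNReal.ofReal |u x| ≤ (V/2)⁻¹ * (C2 * K x) := by
    intro x hx
    have h1 : ENNReal.ofReal |u x| * (V/2) ≤ C2 * K x := by
      calc ENNReal.ofReal |u x| * (V/2)
          ≤ ENNReal.ofReal |u x| * volume {z ∈ B | u z = 0} := mul_le_mul' le_rfl hhalf
        _ ≤ ∫⁻ z in B, ENNReal.ofReal
              (‖x - z‖ * ∫ t in (0:ℝ)..1, ‖gradient u (z + t • (x - z))‖) :=
            avg hN1 hr hu hx
        _ ≤ C2 * K x := core_subst hN1 hr hu hx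
    rw [← ENNReal.le_div_iff_mul_le (Or.inl h2V0) (Or.inl h2Vtop)] at h1
    rwa [ENNReal.div_eq_inv_mul] at h1
  have step1 : Ap ≤ ((V/2)⁻¹ * C2) ^ p * (M ^ p * Dp) := by
    calc Ap ≤ ∫⁻ x in B, ((V/2)⁻¹ * C2) ^ p * (K x) ^ p := by
          refine setLIntegral_mono' measurableSet_ball fun x hx => ?_
          calc (ENNReal.ofReal |u x|) ^ p ≤ ((V/2)⁻¹ * (C2 * K x)) ^ p :=
                ENNReal.rpow_le_rpow (hptwise x hx) hp0.le
            _ = ((V/2)⁻¹ * C2) ^ p * (K x) ^ p := by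
                rw [← mul_assoc, ENNReal.mul_rpow_of_nonneg _ _ hp0.le]
      _ = ((V/2)⁻¹ * C2) ^ p * ∫⁻ x in B, (K x) ^ p :=
          lintegral_const_mul' _ _ (ENNReal.rpow_ne_top_of_nonneg hp0.le hE2top)
      _ ≤ ((V/2)⁻¹ * C2) ^ p * (M ^ p * Dp) :=
          mul_le_mul' le_rfl (schur hN1 hr u hpq)
  have step2 : Ap ^ (1/p) ≤ ((V/2)⁻¹ * C2 * M) * Dp ^ (1/p) := by
    calc Ap ^ (1/p) ≤ (((V/2)⁻¹ * C2) ^ p * (M ^ p * Dp)) ^ (1/p) :=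
          ENNReal.rpow_le_rpow step1 (by positivity)
      _ = ((V/2)⁻¹ * C2 * M) * Dp ^ (1/p) := by
          rw [← mul_assoc, ← ENNReal.mul_rpow_of_nonneg _ _ hp0.le,
            ENNReal.mul_rpow_of_nonneg _ _ (by positivity : (0:ℝ) ≤ 1/p),
            ← ENNReal.rpow_mul, show p * (1/p) = 1 by field_simp, ENNReal.rpow_one]
  have hAeq : ENNReal.ofReal (∫ x in B, |u x| ^ p) = Ap := by
    rw [ofReal_integral_eq_lintegral_ofReal hint1
      (Filter.Eventually.of_forall fun x => Real.rpow_nonneg (abs_nonneg _) _)]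
    exact lintegral_congr fun x => (ENNReal.ofReal_rpow_of_nonneg (abs_nonneg _) hp0.le).symm
  have hDeq : ENNReal.ofReal (∫ x in B, ‖gradient u x‖ ^ p) = Dp := by
    rw [ofReal_integral_eq_lintegral_ofReal hint2
      (Filter.Eventually.of_forall fun x => Real.rpow_nonneg (norm_nonneg _) _)]
    exact lintegral_congr fun x => (ENNReal.ofReal_rpow_of_nonneg (norm_nonneg _) hp0.le).symm
  have hIu : 0 ≤ ∫ x in B, |u x| ^ p :=
    integral_nonneg fun x => Real.rpow_nonneg (abs_nonneg _) _
  have hId : 0 ≤ ∫ x in B, ‖gradient u x‖ ^ p :=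
    integral_nonneg fun x => Real.rpow_nonneg (norm_nonneg _) _
  -- the constant bound
  have hconst : (V/2)⁻¹ * C2 * M ≤
      ENNReal.ofReal ((2^(N+5) * N / ωR) * ωR * p * (((N:ℝ) - 1) / N) * r) := by
    have hVval : V = ENNReal.ofReal (r^N * ωR) := by
      rw [hV, hB, Measure.addHaar_ball volume x₀ hr.le, finrank_euclideanSpace_fin, ← hω,
        ← ENNReal.ofReal_toReal hωtop, ← hωR, ← ENNReal.ofReal_mul (by positivity)]
    have hV2 : V/2 = ENNReal.ofReal (r^N * ωR / 2) := by
      rw [hVval, ENNReal.ofReal_div_of_pos two_pos, ENNReal.ofReal_ofNat]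
    have hV2inv : (V/2)⁻¹ = ENNReal.ofReal ((r^N * ωR / 2)⁻¹) := by
      rw [hV2, ← ENNReal.ofReal_inv_of_pos (by positivity)]
    have hMof : M = ENNReal.ofReal ((N:ℝ) * ωR * (2 * (2*r) ^ ((1:ℝ)/2))) := by
      rw [hM, ← ENNReal.ofReal_toReal hωtop, ← hωR,
        ← ENNReal.ofReal_natCast N, ← ENNReal.ofReal_mul (by positivity),
        ← ENNReal.ofReal_mul (by positivity)]
    rw [hV2inv, hC2, hMof, ← ENNReal.ofReal_mul (by positivity),
      ← ENNReal.ofReal_mul (by positivity)]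
    apply ENNReal.ofReal_le_ofReal
    have hpow : (2*r) ^ ((N:ℝ) + 1/2) * (2*r) ^ ((1:ℝ)/2) = (2*r)^(N+1) := by
      rw [← Real.rpow_natCast (2*r) (N+1), ← Real.rpow_add (by positivity)]
      congr 1
      push_cast
      ring
    have hLHS : (r^N * ωR / 2)⁻¹ * (2 * (2*r) ^ ((N:ℝ) + 1/2)) *
        ((N:ℝ) * ωR * (2 * (2*r) ^ ((1:ℝ)/2))) = 2^(N+4) * N * r := by
      have h1 : (r^N * ωR / 2)⁻¹ * (2 * (2*r) ^ ((N:ℝ) + 1/2)) *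
          ((N:ℝ) * ωR * (2 * (2*r) ^ ((1:ℝ)/2))) =
          (r^N * ωR / 2)⁻¹ * ((N:ℝ) * ωR) * 4 *
            ((2*r) ^ ((N:ℝ) + 1/2) * (2*r) ^ ((1:ℝ)/2)) := by ring
      rw [h1, hpow, mul_pow]
      field_simp
      ring
    rw [hLHS]
    have hhalfN : (1:ℝ)/2 ≤ ((N:ℝ) - 1) / N := by
      rw [div_le_div_iff₀ (by norm_num) (by positivity : (0:ℝ) < N)]
      have : (2:ℝ) ≤ N := by exact_mod_cast hN
      linarith
    have hc2 : (2:ℝ)^(N+5) = 2 * 2^(N+4) := by rw [pow_succ]; ring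
    rw [div_mul_cancel₀ _ hωR0.ne', hc2]
    have h2r : (0:ℝ) < 2^(N+4) := by positivity
    have hNr : (0:ℝ) < N := by positivity
    nlinarith [mul_pos h2r hNr, mul_pos (mul_pos h2r hNr) hr,
      mul_le_mul_of_nonneg_left hhalfN (le_of_lt (mul_pos (mul_pos h2r hNr) hr)),
      hp.le]
  -- final conversion
  have hNc1 : (1:ℝ) ≤ N := by exact_mod_cast hN1
  have hfrac : (0:ℝ) ≤ ((N:ℝ)-1)/N := div_nonneg (by linarith) (by positivity)
  have hcstR : (0:ℝ) ≤ 2^(N+5) * N / ωR * ωR * p * (((N:ℝ)-1)/N) * r :=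
    mul_nonneg (mul_nonneg (mul_nonneg (mul_nonneg
      (div_nonneg (by positivity) hωR0.le) hωR0.le) hp0.le) hfrac) hr.le
  rw [← ENNReal.ofReal_le_ofReal_iff
    (mul_nonneg hcstR (Real.rpow_nonneg hId _))]
  calc ENNReal.ofReal ((∫ x in B, |u x| ^ p) ^ (1/p))
      = Ap ^ (1/p) := by
        rw [← ENNReal.ofReal_rpow_of_nonneg hIu (by positivity : (0:ℝ) ≤ 1/p), hAeq]
    _ ≤ ((V/2)⁻¹ * C2 * M) * Dp ^ (1/p) := step2
    _ ≤ ENNReal.ofReal ((2^(N+5) * N / ωR) * ωR * p * (((N:ℝ) - 1) / N) * r) *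
          ENNReal.ofReal ((∫ x in B, ‖gradient u x‖ ^ p) ^ (1/p)) := by
        apply mul_le_mul' hconst
        rw [← ENNReal.ofReal_rpow_of_nonneg hId (by positivity : (0:ℝ) ≤ 1/p), hDeq]
    _ = ENNReal.ofReal ((2^(N+5) * N / ωR) * ωR * p * (((N:ℝ) - 1) / N) * r *
          (∫ x in B, ‖gradient u x‖ ^ p) ^ (1/p)) := by
        rw [← ENNReal.ofReal_mul hcstR]
end
end

section
/- Let θ > 1, α > 0, β > 0, C > 0, r > 0 and k₀ ∈ ℝ. Let Φ : ℝ × (0, r] → [0, ∞) be nonincreasing in its first argument and nondecreasing in its second argument, and suppose that Φ(l, ρ) ≤ C · Φ(k, σ)^θ / ((σ − ρ)^α · (l − k)^β) for all k₀ ≤ k < l and all 0 < ρ < σ ≤ r. If d > 0 satisfies d^β ≥ 2^{(α+β)/(θ−1) + 2α + β} · C · Φ(k₀, r)^{θ−1} / r^α, then Φ(k₀ + d, r/2) = 0. -/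
set_option maxHeartbeats 2000000 in
/-- Abstract De Giorgi iteration lemma: if `Φ` is nonincreasing in the level, nondecreasing
in the radius, and satisfies the recursive inequality
`Φ(l,ρ) ≤ C Φ(k,σ)^θ / ((σ−ρ)^α (l−k)^β)`, then any `d > 0` with
`d^β ≥ 2^{(α+β)/(θ−1) + 2α + β} C Φ(k₀,r)^{θ−1} / r^α` forces `Φ(k₀+d, r/2) = 0`. -/
theorem stmt5 (θ α β C r k₀ : ℝ)
    (hθ : 1 < θ) (hα : 0 < α) (hβ : 0 < β) (hC : 0 < C) (hr : 0 < r)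
    (Φ : ℝ → ℝ → ℝ)
    (hΦnonneg : ∀ k ρ, 0 ≤ Φ k ρ)
    (hΦlevel : ∀ k l ρ, k ≤ l → 0 < ρ → ρ ≤ r → Φ l ρ ≤ Φ k ρ)
    (hΦradius : ∀ k ρ σ, 0 < ρ → ρ ≤ σ → σ ≤ r → Φ k ρ ≤ Φ k σ)
    (hmain : ∀ k l ρ σ, k₀ ≤ k → k < l → 0 < ρ → ρ < σ → σ ≤ r →
      Φ l ρ ≤ C * Φ k σ ^ θ / ((σ - ρ) ^ α * (l - k) ^ β))
    (d : ℝ) (hd : 0 < d)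
    (hdβ : 2 ^ ((α + β) / (θ - 1) + 2 * α + β) * C * Φ k₀ r ^ (θ - 1) / r ^ α ≤ d ^ β) :
    Φ (k₀ + d) (r / 2) = 0 := by
  have hθ1 : 0 < θ - 1 := by linarith
  set μ : ℝ := (α + β) / (θ - 1) with hμ
  have hμpos : 0 < μ := div_pos (by linarith) hθ1
  have hμθ : μ * (θ - 1) = α + β := by
    rw [hμ]; field_simp
  set Φ₀ : ℝ := Φ k₀ r with hΦ₀
  have hΦ₀nonneg : 0 ≤ Φ₀ := hΦnonneg k₀ r
  rcases eq_or_lt_of_le hΦ₀nonneg with h0 | hΦ₀pos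
  · have h1 : Φ (k₀ + d) (r / 2) ≤ Φ k₀ (r / 2) :=
      hΦlevel _ _ _ (by linarith) (by linarith) (by linarith)
    have h2 : Φ k₀ (r / 2) ≤ Φ₀ := hΦradius _ _ _ (by linarith) (by linarith) le_rfl
    have h3 := hΦnonneg (k₀ + d) (r / 2)
    linarith
  have h2pos : (0:ℝ) < 2 := by norm_num
  have htpos : ∀ m : ℕ, (0:ℝ) < 2 ^ (-(m:ℝ)) := fun m => Real.rpow_pos_of_pos h2pos _
  have htle : ∀ m : ℕ, (2:ℝ) ^ (-(m:ℝ)) ≤ 1 := fun m =>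
    Real.rpow_le_one_of_one_le_of_nonpos (by norm_num)
      (neg_nonpos.mpr (Nat.cast_nonneg m))
  have hrαpos : (0:ℝ) < r ^ α := Real.rpow_pos_of_pos hr _
  -- the iteration
  have key : ∀ m : ℕ,
      Φ (k₀ + d - d * 2 ^ (-(m:ℝ))) (r / 2 + r / 2 * 2 ^ (-(m:ℝ)))
        ≤ Φ₀ * 2 ^ (-(μ * m)) := by
    intro m
    induction m with
    | zero =>
      norm_num
      exact le_rfl
    | succ m ih =>
      have hm1 : ((m + 1 : ℕ) : ℝ) = (m : ℝ) + 1 := by push_cast; ring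
      have ht2 : (2:ℝ) ^ (-((m:ℝ) + 1)) = 2 ^ (-(m:ℝ)) / 2 := by
        rw [show -((m:ℝ) + 1) = -(m:ℝ) + (-1) by ring, Real.rpow_add h2pos,
          Real.rpow_neg_one]
        ring
      have ht4 : (2:ℝ) ^ (-(m:ℝ) - 2) = 2 ^ (-(m:ℝ)) / 4 := by
        rw [show -(m:ℝ) - 2 = -(m:ℝ) + ((-2:ℤ):ℝ) by push_cast; ring,
          Real.rpow_add h2pos, Real.rpow_intCast]
        norm_num
        ring
      set t : ℝ := (2:ℝ) ^ (-(m:ℝ)) with htdef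
      have htpos' : 0 < t := htpos m
      have htle' : t ≤ 1 := htle m
      -- apply the main inequality
      have hKge : k₀ ≤ k₀ + d - d * t := by nlinarith
      have hKlt : k₀ + d - d * t < k₀ + d - d * (t / 2) := by nlinarith
      have hRpos : 0 < r / 2 + r / 2 * (t / 2) := by nlinarith
      have hRlt : r / 2 + r / 2 * (t / 2) < r / 2 + r / 2 * t := by nlinarith
      have hRle : r / 2 + r / 2 * t ≤ r := by nlinarith
      have h := hmain (k₀ + d - d * t) (k₀ + d - d * (t / 2))
        (r / 2 + r / 2 * (t / 2)) (r / 2 + r / 2 * t) hKge hKlt hRpos hRlt hRle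
      rw [hm1, ht2]
      have hdiffR : r / 2 + r / 2 * t - (r / 2 + r / 2 * (t / 2)) = r * (t / 4) := by ring
      have hdiffK : k₀ + d - d * (t / 2) - (k₀ + d - d * t) = d * (t / 2) := by ring
      rw [hdiffR, hdiffK] at h
      have hDpos : (0:ℝ) < (r * (t / 4)) ^ α * (d * (t / 2)) ^ β := by positivity
      refine h.trans ?_
      rw [div_le_iff₀ hDpos]
      -- bound Φ(K m, R m)^θ
      have hstep1 : C * Φ (k₀ + d - d * t) (r / 2 + r / 2 * t) ^ θ
          ≤ C * (Φ₀ * 2 ^ (-(μ * m))) ^ θ := by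
        have := Real.rpow_le_rpow (hΦnonneg _ _) ih (by linarith : (0:ℝ) ≤ θ)
        exact mul_le_mul_of_nonneg_left this hC.le
      refine hstep1.trans ?_
      -- rewrite the denominator pieces
      have hsplit1 : (r * (t / 4)) ^ α = r ^ α * 2 ^ ((-(m:ℝ) - 2) * α) := by
        rw [show t / 4 = (2:ℝ) ^ (-(m:ℝ) - 2) from ht4.symm,
          Real.mul_rpow hr.le (Real.rpow_pos_of_pos h2pos _).le,
          ← Real.rpow_mul (by norm_num : (0:ℝ) ≤ 2)]
      have hsplit2 : (d * (t / 2)) ^ β = d ^ β * 2 ^ ((-(m:ℝ) - 1) * β) := by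
        rw [show t / 2 = (2:ℝ) ^ (-(m:ℝ) - 1) from by
            rw [show -(m:ℝ) - 1 = -((m:ℝ) + 1) by ring]; exact ht2.symm,
          Real.mul_rpow hd.le (Real.rpow_pos_of_pos h2pos _).le,
          ← Real.rpow_mul (by norm_num : (0:ℝ) ≤ 2)]
      rw [hsplit1, hsplit2]
      -- use hdβ to replace d^β by its lower bound
      have hmono : Φ₀ * 2 ^ (-(μ * ((m:ℝ) + 1))) *
            (r ^ α * 2 ^ ((-(m:ℝ) - 2) * α) *
              ((2 ^ (μ + 2 * α + β) * C * Φ₀ ^ (θ - 1) / r ^ α) * 2 ^ ((-(m:ℝ) - 1) * β)))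
          ≤ Φ₀ * 2 ^ (-(μ * ((m:ℝ) + 1))) *
            (r ^ α * 2 ^ ((-(m:ℝ) - 2) * α) * (d ^ β * 2 ^ ((-(m:ℝ) - 1) * β))) := by
        gcongr
      refine le_trans (le_of_eq ?_) hmono
      -- the exact identity
      have hΦθ : Φ₀ * Φ₀ ^ (θ - 1) = Φ₀ ^ θ := by
        calc Φ₀ * Φ₀ ^ (θ - 1) = Φ₀ ^ (1:ℝ) * Φ₀ ^ (θ - 1) := by rw [Real.rpow_one]
          _ = Φ₀ ^ (1 + (θ - 1)) := (Real.rpow_add hΦ₀pos _ _).symm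
          _ = Φ₀ ^ θ := by ring_nf
      have hexp : -(μ * ((m:ℝ) + 1)) + (-(m:ℝ) - 2) * α + (μ + 2 * α + β)
          + (-(m:ℝ) - 1) * β = -(μ * m) * θ := by
        linear_combination (m:ℝ) * hμθ
      calc C * (Φ₀ * 2 ^ (-(μ * (m:ℝ)))) ^ θ
          = C * (Φ₀ ^ θ * 2 ^ (-(μ * (m:ℝ)) * θ)) := by
            rw [Real.mul_rpow hΦ₀nonneg (Real.rpow_pos_of_pos h2pos _).le,
              ← Real.rpow_mul (by norm_num : (0:ℝ) ≤ 2)]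
        _ = C * (Φ₀ * Φ₀ ^ (θ - 1)) *
            (2 ^ (-(μ * ((m:ℝ) + 1)) + (-(m:ℝ) - 2) * α + (μ + 2 * α + β)
              + (-(m:ℝ) - 1) * β)) := by
            rw [hΦθ, hexp]; ring
        _ = Φ₀ * 2 ^ (-(μ * ((m:ℝ) + 1))) *
            (r ^ α * 2 ^ ((-(m:ℝ) - 2) * α) *
              ((2 ^ (μ + 2 * α + β) * C * Φ₀ ^ (θ - 1) / r ^ α) * 2 ^ ((-(m:ℝ) - 1) * β))) := by
            rw [Real.rpow_add h2pos, Real.rpow_add h2pos, Real.rpow_add h2pos]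
            field_simp
  -- pass to the limit
  have hq1 : (2:ℝ) ^ (-μ) < 1 :=
    Real.rpow_lt_one_of_one_lt_of_neg (by norm_num) (by linarith)
  have hq0 : (0:ℝ) ≤ (2:ℝ) ^ (-μ) := (Real.rpow_pos_of_pos h2pos _).le
  have heq : ∀ m : ℕ, (2:ℝ) ^ (-(μ * m)) = ((2:ℝ) ^ (-μ)) ^ (m:ℕ) := by
    intro m
    rw [← Real.rpow_natCast ((2:ℝ) ^ (-μ)) m, ← Real.rpow_mul (by norm_num : (0:ℝ) ≤ 2)]
    ring_nf
  have hbound : ∀ m : ℕ, Φ (k₀ + d) (r / 2) ≤ Φ₀ * ((2:ℝ) ^ (-μ)) ^ m := by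
    intro m
    have htpos' := htpos m
    have htle' := htle m
    have hA : 0 ≤ r / 2 * 2 ^ (-(m:ℝ)) := by positivity
    have hB : r / 2 * 2 ^ (-(m:ℝ)) ≤ r / 2 :=
      mul_le_of_le_one_right (by linarith) htle'
    have hA' : 0 ≤ d * 2 ^ (-(m:ℝ)) := by positivity
    have h1 : Φ (k₀ + d) (r / 2) ≤ Φ (k₀ + d) (r / 2 + r / 2 * 2 ^ (-(m:ℝ))) :=
      hΦradius _ _ _ (by linarith) (by linarith) (by linarith)
    have h2 : Φ (k₀ + d) (r / 2 + r / 2 * 2 ^ (-(m:ℝ)))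
        ≤ Φ (k₀ + d - d * 2 ^ (-(m:ℝ))) (r / 2 + r / 2 * 2 ^ (-(m:ℝ))) :=
      hΦlevel _ _ _ (by linarith) (by linarith) (by linarith)
    calc Φ (k₀ + d) (r / 2) ≤ Φ (k₀ + d - d * 2 ^ (-(m:ℝ))) (r / 2 + r / 2 * 2 ^ (-(m:ℝ))) :=
          h1.trans h2
      _ ≤ Φ₀ * 2 ^ (-(μ * m)) := key m
      _ = Φ₀ * ((2:ℝ) ^ (-μ)) ^ m := by rw [heq]
  have hlim : Filter.Tendsto (fun m : ℕ => Φ₀ * ((2:ℝ) ^ (-μ)) ^ m)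
      Filter.atTop (nhds 0) := by
    have := (tendsto_pow_atTop_nhds_zero_of_lt_one hq0 hq1).const_mul Φ₀
    simpa using this
  have hle0 : Φ (k₀ + d) (r / 2) ≤ 0 :=
    le_of_tendsto_of_tendsto' tendsto_const_nhds hlim hbound
  exact le_antisymm hle0 (hΦnonneg _ _)
end
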